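/- For all real x ≠ 0, 9 > ((sinh x)/x)·(−6 + 5x³/(x·cosh x − sinh x)). -/

import Mathlib

open Real Set

lemma aux_pos {f : ℝ → ℝ} (hc : ContinuousOn f (Set.Ici 0))
    (hd : ∀ y : ℝ, 0 < y → 0 < deriv f y) (h0 : f 0 = 0) {x : ℝ} (hx : 0 < x) : 0 < f x := by
  have hm := strictMonoOn_of_deriv_pos (convex_Ici (0:ℝ)) hc
    (fun y hy => hd y (by simpa [interior_Ici] using hy))
  have := hm Set.self_mem_Ici (Set.mem_Ici.mpr hx.le) hx
  simpa [h0] using this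

lemma f1_pos {x : ℝ} (hx : 0 < x) : 0 < x * Real.cosh x - Real.sinh x := by
  have h : (0:ℝ) < (fun y : ℝ => y * Real.cosh y - Real.sinh y) x := by
    apply aux_pos (by fun_prop) _ (by simp) hx
    intro y hy
    have hD : HasDerivAt (fun y : ℝ => y * Real.cosh y - Real.sinh y) _ y :=
      ((hasDerivAt_id' (x := y)).mul (Real.hasDerivAt_cosh y)).sub (Real.hasDerivAt_sinh y)
    rw [hD.deriv]
    have := Real.sinh_pos_iff.mpr hy
    nlinarith
  exact h

lemma f2_pos {x : ℝ} (hx : 0 < x) : 0 < (3 + x^2) * Real.sinh x - 3 * x * Real.cosh x := by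
  have h : (0:ℝ) < (fun y : ℝ => (3 + y^2) * Real.sinh y - 3 * y * Real.cosh y) x := by
    apply aux_pos (by fun_prop) _ (by simp) hx
    intro y hy
    have hD : HasDerivAt (fun y : ℝ => (3 + y^2) * Real.sinh y - 3 * y * Real.cosh y) _ y :=
      (((hasDerivAt_const y (3:ℝ)).add (hasDerivAt_pow 2 y)).mul (Real.hasDerivAt_sinh y)).sub
        (((hasDerivAt_id' (x := y)).const_mul 3).mul (Real.hasDerivAt_cosh y))
    rw [hD.deriv]
    have h1 := f1_pos hy
    push_cast
    simp only [Pi.add_apply, Pi.sub_apply, Pi.mul_apply, Pi.pow_apply]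
    nlinarith
  exact h

lemma f4_pos {x : ℝ} (hx : 0 < x) : 0 < Real.cosh x - 1 - x^2/2 := by
  have h : (0:ℝ) < (fun y : ℝ => Real.cosh y - 1 - y^2/2) x := by
    apply aux_pos (by fun_prop) _ (by simp) hx
    intro y hy
    have hD : HasDerivAt (fun y : ℝ => Real.cosh y - 1 - y^2/2) _ y :=
      ((Real.hasDerivAt_cosh y).sub (hasDerivAt_const y 1)).sub
        ((hasDerivAt_pow 2 y).div_const 2)
    rw [hD.deriv]
    have := (Real.self_lt_sinh_iff (x := y)).mpr hy
    push_cast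
    nlinarith
  exact h

lemma H_pos {x : ℝ} (hx : 0 < x) :
    0 < 24 * Real.sinh x * Real.cosh x - 3 * Real.sinh x - 21 * x * Real.cosh x
      - 5 * x^2 * Real.sinh x := by
  have hs : 0 < Real.sinh x := Real.sinh_pos_iff.mpr hx
  have h2 := f2_pos hx
  have h4 := f4_pos hx
  nlinarith [mul_pos hs h4]

lemma Gp_pos {x : ℝ} (hx : 0 < x) :
    0 < 9*x*Real.cosh x - 6*x^2*Real.sinh x - 6*Real.sinh x*Real.cosh x
      + 6*x*(Real.cosh x)^2 + 6*x*(Real.sinh x)^2 - 9*Real.sinh x - 5*x^3*Real.cosh x := by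
  have h : (0:ℝ) < (fun y : ℝ => 9*y*Real.cosh y - 6*y^2*Real.sinh y - 6*Real.sinh y*Real.cosh y
      + 6*y*(Real.cosh y)^2 + 6*y*(Real.sinh y)^2 - 9*Real.sinh y - 5*y^3*Real.cosh y) x := by
    apply aux_pos (by fun_prop) _ (by simp) hx
    intro y hy
    have hD : HasDerivAt (fun y : ℝ => 9*y*Real.cosh y - 6*y^2*Real.sinh y
        - 6*Real.sinh y*Real.cosh y + 6*y*(Real.cosh y)^2 + 6*y*(Real.sinh y)^2
        - 9*Real.sinh y - 5*y^3*Real.cosh y) _ y :=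
      (((((((hasDerivAt_id' (x := y)).const_mul 9).mul (Real.hasDerivAt_cosh y)).sub
        (((hasDerivAt_pow 2 y).const_mul 6).mul (Real.hasDerivAt_sinh y))).sub
        (((Real.hasDerivAt_sinh y).const_mul 6).mul (Real.hasDerivAt_cosh y))).add
        (((hasDerivAt_id' (x := y)).const_mul 6).mul ((Real.hasDerivAt_cosh y).pow 2))).add
        (((hasDerivAt_id' (x := y)).const_mul 6).mul ((Real.hasDerivAt_sinh y).pow 2))).sub
        ((Real.hasDerivAt_sinh y).const_mul 9) |>.sub
        (((hasDerivAt_pow 3 y).const_mul 5).mul (Real.hasDerivAt_cosh y))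
    rw [hD.deriv]
    have hH := H_pos hy
    push_cast
    simp only [Pi.add_apply, Pi.sub_apply, Pi.mul_apply, Pi.pow_apply]
    nlinarith [mul_pos hy hH]
  exact h

lemma G_pos {x : ℝ} (hx : 0 < x) :
    0 < (9*x + 6*Real.sinh x) * (x*Real.cosh x - Real.sinh x) - 5*x^3*Real.sinh x := by
  have h : (0:ℝ) < (fun y : ℝ => (9*y + 6*Real.sinh y) * (y*Real.cosh y - Real.sinh y)
      - 5*y^3*Real.sinh y) x := by
    apply aux_pos (by fun_prop) _ (by simp) hx
    intro y hy
    have hD : HasDerivAt (fun y : ℝ => (9*y + 6*Real.sinh y) * (y*Real.cosh y - Real.sinh y)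
        - 5*y^3*Real.sinh y) _ y :=
      ((((hasDerivAt_id' (x := y)).const_mul 9).add ((Real.hasDerivAt_sinh y).const_mul 6)).mul
        (((hasDerivAt_id' (x := y)).mul (Real.hasDerivAt_cosh y)).sub (Real.hasDerivAt_sinh y))).sub
        (((hasDerivAt_pow 3 y).const_mul 5).mul (Real.hasDerivAt_sinh y))
    rw [hD.deriv]
    have hG := Gp_pos hy
    push_cast
    simp only [Pi.add_apply, Pi.sub_apply, Pi.mul_apply, Pi.pow_apply]
    nlinarith
  exact h

lemma key_pos {x : ℝ} (hx : 0 < x) :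
    9 > (Real.sinh x / x) * (-6 + 5 * x^3 / (x * Real.cosh x - Real.sinh x)) := by
  have hD := f1_pos hx
  have hG := G_pos hx
  have hE : 9 - (Real.sinh x / x) * (-6 + 5 * x^3 / (x * Real.cosh x - Real.sinh x))
      = ((9*x + 6*Real.sinh x) * (x*Real.cosh x - Real.sinh x) - 5*x^3*Real.sinh x)
        / (x * (x * Real.cosh x - Real.sinh x)) := by
    field_simp
    ring
  have hpos : (0:ℝ) < ((9*x + 6*Real.sinh x) * (x*Real.cosh x - Real.sinh x) - 5*x^3*Real.sinh x)
      / (x * (x * Real.cosh x - Real.sinh x)) := div_pos hG (mul_pos hx hD)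
  linarith [hE ▸ hpos]

theorem huygens_hyperbolic_special (x : ℝ) (hx : x ≠ 0) :
    9 > (Real.sinh x / x) * (-6 + 5 * x^3 / (x * Real.cosh x - Real.sinh x)) := by
  rcases lt_or_gt_of_ne hx with h | h
  · have h' := key_pos (x := -x) (by linarith)
    have heq : (Real.sinh (-x) / (-x)) * (-6 + 5 * (-x)^3 / ((-x) * Real.cosh (-x) - Real.sinh (-x)))
        = (Real.sinh x / x) * (-6 + 5 * x^3 / (x * Real.cosh x - Real.sinh x)) := by
      rw [Real.sinh_neg, Real.cosh_neg,
        show ((-x)^3 : ℝ) = -(x^3) by ring,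
        show (-x * Real.cosh x - -Real.sinh x : ℝ) = -(x * Real.cosh x - Real.sinh x) by ring,
        mul_neg, neg_div_neg_eq, neg_div_neg_eq]
    rwa [heq] at h'
  · exact key_pos h
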